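/- Let k ≥ 2. In ℝ^{k+2} consider the k+6 vectors: d₁ = (1,2,…,k,0,1), d₂ = (0,…,0,0,−2), d₃ = (1,2,…,k,1,0), d₄ = (0,…,0,−2,0), d₅ = (2,2,…,2,0,0), d_{5+i} = −2e_i for i = 1,…,k, and d_{k+6} = (0,…,0,1,1). For each j ∈ {1,…,k+6} let F_j = cone({d_l : l ≠ j}). Then the intersection ⋂_{j=1}^{k+6} F_j equals cone(q₁, q₂, u₁, …, u_k), where q₁ = e_{k+1}, q₂ = e_{k+2}, and u_i = (1,2,…,i−1,i,i,…,i,0,0) (first i−1 coordinates 1,2,…,i−1, coordinates i through k equal to i, last two coordinates 0), and this cone equals the set {a ∈ ℝ^{k+2} : a_{k+1} ≥ 0, a_{k+2} ≥ 0, 2a₁ ≥ a₂, a_k ≥ a_{k−1}, and 2a_i ≥ a_{i−1} + a_{i+1} for all 1 < i < k}. -/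

import Mathlib

/-- The cone generated by a set `S` of vectors: all finite nonnegative real
linear combinations of elements of `S`. -/
def cone {m : ℕ} (S : Set (Fin m → ℝ)) : Set (Fin m → ℝ) :=
  {x | ∃ (n : ℕ) (c : Fin n → ℝ) (g : Fin n → (Fin m → ℝ)),
    (∀ i, 0 ≤ c i) ∧ (∀ i, g i ∈ S) ∧ x = ∑ i, c i • g i}


namespace Stmt19
variable {m : ℕ} {S T : Set (Fin m → ℝ)}

lemma zero_mem_cone : (0 : Fin m → ℝ) ∈ cone S :=
  ⟨0, fun i => i.elim0, fun i => i.elim0, fun i => i.elim0, fun i => i.elim0, by simp⟩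

lemma smul_mem_cone {s : Fin m → ℝ} (hs : s ∈ S) {c : ℝ} (hc : 0 ≤ c) : c • s ∈ cone S :=
  ⟨1, fun _ => c, fun _ => s, fun _ => hc, fun _ => hs, by simp⟩

lemma mem_cone_self {s : Fin m → ℝ} (hs : s ∈ S) : s ∈ cone S := by
  simpa using smul_mem_cone hs (zero_le_one)

lemma add_mem_cone {x y : Fin m → ℝ} (hx : x ∈ cone S) (hy : y ∈ cone S) :
    x + y ∈ cone S := by
  obtain ⟨n, c, g, hc, hg, rfl⟩ := hx
  obtain ⟨n', c', g', hc', hg', rfl⟩ := hy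
  refine ⟨n + n', Fin.addCases c c', Fin.addCases g g', ?_, ?_, ?_⟩
  · intro i
    refine Fin.addCases (fun i => ?_) (fun i => ?_) i <;> simp [hc, hc']
  · intro i
    refine Fin.addCases (fun i => ?_) (fun i => ?_) i <;> simp [hg _, hg' _]
  · rw [Fin.sum_univ_add]
    simp

lemma smul_mem_cone' {x : Fin m → ℝ} (hx : x ∈ cone S) {c : ℝ} (hc : 0 ≤ c) :
    c • x ∈ cone S := by
  obtain ⟨n, cc, g, hcc, hg, rfl⟩ := hx
  refine ⟨n, fun i => c * cc i, g, fun i => mul_nonneg hc (hcc i), hg, ?_⟩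
  rw [Finset.smul_sum]
  simp [smul_smul]

lemma sum_mem_cone {ι : Type*} (t : Finset ι) (f : ι → (Fin m → ℝ))
    (h : ∀ i ∈ t, f i ∈ cone S) : ∑ i ∈ t, f i ∈ cone S := by
  classical
  induction t using Finset.induction_on with
  | empty => simpa using (zero_mem_cone (S := S))
  | insert _ _ hnot ih =>
      rw [Finset.sum_insert hnot]
      exact add_mem_cone (h _ (Finset.mem_insert_self _ _))
        (ih fun i hi => h i (Finset.mem_insert_of_mem hi))

lemma cone_subset_cone (h : ∀ s ∈ S, s ∈ cone T) : cone S ⊆ cone T := by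
  rintro x ⟨n, c, g, hc, hg, rfl⟩
  exact sum_mem_cone _ _ fun i _ => smul_mem_cone' (h _ (hg i)) (hc i)

lemma sum_fin_ite (k : ℕ) (f : ℕ → ℝ) (t : ℕ) :
    ∑ j : Fin k, (if t = (j : ℕ) then f (j : ℕ) else 0) = if t < k then f t else 0 := by
  rw [Fin.sum_univ_eq_sum_range (fun j => if t = j then f j else 0)]
  rw [Finset.sum_ite_eq (Finset.range k) t f]
  simp


lemma cone_eval (φ : (Fin m → ℝ) →ₗ[ℝ] ℝ) (hφ : ∀ s ∈ S, 0 ≤ φ s)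
    {x : Fin m → ℝ} (hx : x ∈ cone S) : 0 ≤ φ x := by
  obtain ⟨n, c, g, hc, hg, rfl⟩ := hx
  rw [map_sum]
  exact Finset.sum_nonneg fun i _ => by
    rw [map_smul]; exact mul_nonneg (hc i) (hφ _ (hg i))

end Stmt19

lemma Stmt19.part2a (k : ℕ) (hk : k ≥ 2)
    (q₁ : Fin (k + 2) → ℝ) (hq₁ : q₁ = fun j : Fin (k + 2) =>
      if (j : ℕ) = k then (1 : ℝ) else 0)
    (q₂ : Fin (k + 2) → ℝ) (hq₂ : q₂ = fun j : Fin (k + 2) =>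
      if (j : ℕ) = k + 1 then (1 : ℝ) else 0)
    (u : Fin k → Fin (k + 2) → ℝ)
    (hu : ∀ i j, u i j =
      if (j : ℕ) < k then ((min ((j : ℕ) + 1) ((i : ℕ) + 1) : ℕ) : ℝ) else 0) :
    cone ({q₁} ∪ {q₂} ∪ Set.range u)
      ⊆ {a : Fin (k + 2) → ℝ |
          0 ≤ a ⟨k, by have := hk; omega⟩ ∧
          0 ≤ a ⟨k + 1, by have := hk; omega⟩ ∧
          a ⟨1, by have := hk; omega⟩ ≤ 2 * a ⟨0, by have := hk; omega⟩ ∧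
          a ⟨k - 2, by have := hk; omega⟩ ≤ a ⟨k - 1, by have := hk; omega⟩ ∧
          ∀ (i : ℕ) (h1 : 0 < i) (h2 : i + 2 ≤ k),
            a ⟨i - 1, by have := hk; omega⟩ + a ⟨i + 1, by have := hk; omega⟩ ≤ 2 * a ⟨i, by have := hk; omega⟩} := by
  intro x hx
  have hgen : ∀ s ∈ ({q₁} ∪ {q₂} ∪ Set.range u), s = q₁ ∨ s = q₂ ∨ ∃ i, s = u i := by
    intro s hs
    rcases hs with (h | h) | ⟨i, rfl⟩
    · exact Or.inl h
    · exact Or.inr (Or.inl h)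
    · exact Or.inr (Or.inr ⟨_, rfl⟩)
  refine ⟨?_, ?_, ?_, ?_, ?_⟩
  · -- 0 ≤ x ⟨k⟩
    refine Stmt19.cone_eval (LinearMap.proj (⟨k, by omega⟩ : Fin (k+2))) ?_ hx
    intro s hs
    rcases hgen s hs with rfl | rfl | ⟨i, rfl⟩ <;>
      simp [hq₁, hq₂, hu] <;> positivity
  · refine Stmt19.cone_eval (LinearMap.proj (⟨k + 1, by omega⟩ : Fin (k+2))) ?_ hx
    intro s hs
    rcases hgen s hs with rfl | rfl | ⟨i, rfl⟩ <;>
      simp [hq₁, hq₂, hu] <;> positivity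
  · have h := Stmt19.cone_eval
      ((2 : ℝ) • (LinearMap.proj (⟨0, by omega⟩ : Fin (k+2)) : (Fin (k+2) → ℝ) →ₗ[ℝ] ℝ)
        - LinearMap.proj (⟨1, by omega⟩ : Fin (k+2))) ?_ hx
    · simp only [LinearMap.sub_apply, LinearMap.smul_apply, LinearMap.proj_apply,
        smul_eq_mul] at h
      linarith
    · intro s hs
      rcases hgen s hs with rfl | rfl | ⟨i, rfl⟩ <;>
        simp only [LinearMap.sub_apply, LinearMap.smul_apply, LinearMap.proj_apply,
          smul_eq_mul, hq₁, hq₂, hu, Fin.val_mk]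
      · rw [if_neg (by omega), if_neg (by omega)]
        norm_num
      · rw [if_neg (by omega), if_neg (by omega)]
        norm_num
      · rw [if_pos (by omega), if_pos (by omega)]
        have : min (1 + 1) ((i : ℕ) + 1) ≤ 2 * min (0 + 1) ((i : ℕ) + 1) := by omega
        have := (Nat.cast_le (α := ℝ)).2 this
        push_cast at this ⊢
        linarith
  · have h := Stmt19.cone_eval
      ((LinearMap.proj (⟨k - 1, by omega⟩ : Fin (k+2)) : (Fin (k+2) → ℝ) →ₗ[ℝ] ℝ)
        - LinearMap.proj (⟨k - 2, by omega⟩ : Fin (k+2))) ?_ hx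
    · simp only [LinearMap.sub_apply, LinearMap.proj_apply] at h
      linarith
    · intro s hs
      rcases hgen s hs with rfl | rfl | ⟨i, rfl⟩ <;>
        simp only [LinearMap.sub_apply, LinearMap.proj_apply, hq₁, hq₂, hu, Fin.val_mk]
      · rw [if_neg (by omega), if_neg (by omega)]; norm_num
      · rw [if_neg (by omega), if_neg (by omega)]; norm_num
      · rw [if_pos (by omega), if_pos (by omega)]
        have : min (k - 2 + 1) ((i : ℕ) + 1) ≤ min (k - 1 + 1) ((i : ℕ) + 1) := by omega
        have := (Nat.cast_le (α := ℝ)).2 this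
        linarith
  · intro i h1 h2
    have h := Stmt19.cone_eval
      ((2 : ℝ) • (LinearMap.proj (⟨i, by omega⟩ : Fin (k+2)) : (Fin (k+2) → ℝ) →ₗ[ℝ] ℝ)
        - LinearMap.proj (⟨i - 1, by omega⟩ : Fin (k+2))
        - LinearMap.proj (⟨i + 1, by omega⟩ : Fin (k+2))) ?_ hx
    · simp only [LinearMap.sub_apply, LinearMap.smul_apply, LinearMap.proj_apply,
        smul_eq_mul] at h
      linarith
    · intro s hs
      rcases hgen s hs with rfl | rfl | ⟨j, rfl⟩ <;>
        simp only [LinearMap.sub_apply, LinearMap.smul_apply, LinearMap.proj_apply,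
          smul_eq_mul, hq₁, hq₂, hu, Fin.val_mk]
      · rw [if_neg (by omega), if_neg (by omega), if_neg (by omega)]; norm_num
      · rw [if_neg (by omega), if_neg (by omega), if_neg (by omega)]; norm_num
      · rw [if_pos (by omega), if_pos (by omega), if_pos (by omega)]
        have : min (i - 1 + 1) ((j : ℕ) + 1) + min (i + 1 + 1) ((j : ℕ) + 1)
            ≤ 2 * min (i + 1) ((j : ℕ) + 1) := by omega
        have := (Nat.cast_le (α := ℝ)).2 this
        push_cast at this ⊢
        linarith

lemma Stmt19.part2b (k : ℕ) (hk : k ≥ 2)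
    (q₁ : Fin (k + 2) → ℝ) (hq₁ : q₁ = fun j : Fin (k + 2) =>
      if (j : ℕ) = k then (1 : ℝ) else 0)
    (q₂ : Fin (k + 2) → ℝ) (hq₂ : q₂ = fun j : Fin (k + 2) =>
      if (j : ℕ) = k + 1 then (1 : ℝ) else 0)
    (u : Fin k → Fin (k + 2) → ℝ)
    (hu : ∀ i j, u i j =
      if (j : ℕ) < k then ((min ((j : ℕ) + 1) ((i : ℕ) + 1) : ℕ) : ℝ) else 0) :
    {a : Fin (k + 2) → ℝ |
          0 ≤ a ⟨k, by have := hk; omega⟩ ∧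
          0 ≤ a ⟨k + 1, by have := hk; omega⟩ ∧
          a ⟨1, by have := hk; omega⟩ ≤ 2 * a ⟨0, by have := hk; omega⟩ ∧
          a ⟨k - 2, by have := hk; omega⟩ ≤ a ⟨k - 1, by have := hk; omega⟩ ∧
          ∀ (i : ℕ) (h1 : 0 < i) (h2 : i + 2 ≤ k),
            a ⟨i - 1, by have := hk; omega⟩ + a ⟨i + 1, by have := hk; omega⟩ ≤ 2 * a ⟨i, by have := hk; omega⟩}
      ⊆ cone ({q₁} ∪ {q₂} ∪ Set.range u) := by
  intro a ha
  obtain ⟨h1, h2, h3, h4, h5⟩ := ha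
  -- ℕ-indexed version of a
  set A : ℕ → ℝ := fun i => if h : i < k + 2 then a ⟨i, h⟩ else 0 with hA
  -- slope sequence
  set s : ℕ → ℝ := fun i => if i = 0 then A 0 else if i < k then A i - A (i - 1) else 0
    with hs
  set lam : ℕ → ℝ := fun i => s i - s (i + 1) with hlam
  have hA_eq : ∀ (i : ℕ) (h : i < k + 2), A i = a ⟨i, h⟩ := by
    intro i h; simp [hA, h]
  have hs0 : s 0 = A 0 := by simp [hs]
  have hsv : ∀ i, i ≠ 0 → i < k → s i = A i - A (i - 1) := by
    intro i h0 hik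
    simp only [hs]
    rw [if_neg h0, if_pos hik]
  have hsz : ∀ i, ¬ i < k → s i = 0 := by
    intro i h
    simp only [hs]
    rw [if_neg (by omega), if_neg h]
  have haj : ∀ j : Fin (k+2), A (j : ℕ) = a j := by
    intro j
    rw [hA_eq _ j.isLt]
  have hs_sum : ∀ j, j < k → ∑ i ∈ Finset.range (j + 1), s i = A j := by
    intro j hj
    induction j with
    | zero => simp [hs0]
    | succ n ih =>
        rw [Finset.sum_range_succ, ih (by omega), hsv (n+1) (by omega) hj]
        simp only [Nat.add_sub_cancel]
        ring
  have hlam_nonneg : ∀ i, 0 ≤ lam i := by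
    intro i
    simp only [hlam]
    by_cases h0 : i = 0
    · subst h0
      rw [hs0, hsv 1 (by omega) (by omega)]
      norm_num
      rw [hA_eq 0 (by omega), hA_eq 1 (by omega)]
      linarith [h3]
    · by_cases hik : i < k
      · by_cases hik1 : i + 1 < k
        · rw [hsv i h0 hik, hsv (i+1) (by omega) hik1]
          simp only [Nat.add_sub_cancel]
          rw [hA_eq i (by omega), hA_eq (i-1) (by omega), hA_eq (i+1) (by omega)]
          have := h5 i (by omega) (by omega)
          linarith
        · rw [hsv i h0 hik, hsz (i+1) (by omega)]
          rw [hA_eq i (by omega), hA_eq (i-1) (by omega)]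
          have hi : i = k - 1 := by omega
          have hi1 : i - 1 = k - 2 := by omega
          rw [show (⟨i, by omega⟩ : Fin (k+2)) = ⟨k-1, by omega⟩ from by simp [hi],
            show (⟨i-1, by omega⟩ : Fin (k+2)) = ⟨k-2, by omega⟩ from by simp [hi1]]
          linarith [h4]
      · rw [hsz i hik, hsz (i+1) (by omega)]
        simp
  have hsk : s k = 0 := hsz k (by omega)
  have T1 : ∀ p : ℕ, ∑ i ∈ Finset.range p, lam i * ((i : ℝ) + 1)
      = (∑ i ∈ Finset.range p, s i) - p * s p := by
    intro p
    induction p with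
    | zero => simp
    | succ n ih =>
        rw [Finset.sum_range_succ, Finset.sum_range_succ, ih]
        simp only [hlam]
        push_cast
        ring
  have T2 : ∀ p q : ℕ, p ≤ q → ∑ i ∈ Finset.Ico p q, lam i = s p - s q := by
    intro p q hpq
    induction q, hpq using Nat.le_induction with
    | base => simp
    | succ n hn ih =>
        rw [Finset.sum_Ico_succ_top hn, ih]
        simp only [hlam]
        ring
  have key : ∀ j, j < k →
      ∑ i ∈ Finset.range k, lam i * ((min (j+1) (i+1) : ℕ) : ℝ) = A j := by
    intro j hj
    rw [← Finset.sum_range_add_sum_Ico _ (show j+1 ≤ k by omega)]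
    have e1 : ∑ i ∈ Finset.range (j+1), lam i * ((min (j+1) (i+1) : ℕ) : ℝ)
        = ∑ i ∈ Finset.range (j+1), lam i * ((i : ℝ) + 1) := by
      apply Finset.sum_congr rfl
      intro i hi
      rw [Finset.mem_range] at hi
      rw [min_eq_right (by omega : i + 1 ≤ j + 1)]
      push_cast
      ring
    have e2 : ∑ i ∈ Finset.Ico (j+1) k, lam i * ((min (j+1) (i+1) : ℕ) : ℝ)
        = (∑ i ∈ Finset.Ico (j+1) k, lam i) * ((j : ℝ) + 1) := by
      rw [Finset.sum_mul]
      apply Finset.sum_congr rfl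
      intro i hi
      rw [Finset.mem_Ico] at hi
      rw [min_eq_left (by omega : j + 1 ≤ i + 1)]
      push_cast
      ring
    rw [e1, e2, T1, T2 _ _ (by omega), hsk, hs_sum j hj]
    push_cast
    ring
  have decomp : a = (∑ i : Fin k, lam (i : ℕ) • u i) + (A k • q₁ + A (k+1) • q₂) := by
    funext j
    simp only [Pi.add_apply, Finset.sum_apply, Pi.smul_apply, smul_eq_mul, hq₁, hq₂]
    by_cases hjk : (j : ℕ) < k
    · rw [if_neg (by omega : ¬ (j : ℕ) = k), if_neg (by omega : ¬ (j : ℕ) = k + 1)]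
      have hval : ∀ i : Fin k, u i j = ((min ((j:ℕ)+1) ((i:ℕ)+1) : ℕ) : ℝ) := by
        intro i
        rw [hu]
        exact if_pos hjk
      simp only [hval]
      rw [Fin.sum_univ_eq_sum_range (fun i => lam i * ((min ((j:ℕ)+1) (i+1) : ℕ) : ℝ))]
      rw [key (j : ℕ) hjk, haj]
      ring
    · have hu0 : ∀ i : Fin k, u i j = 0 := by
        intro i
        rw [hu]
        exact if_neg hjk
      simp only [hu0, mul_zero, Finset.sum_const_zero]
      by_cases hjk2 : (j : ℕ) = k
      · rw [if_pos hjk2, if_neg (by omega : ¬ (j : ℕ) = k + 1)]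
        rw [← hjk2, haj]
        ring
      · have hj1 : (j : ℕ) = k + 1 := by omega
        rw [if_neg hjk2, if_pos hj1]
        rw [← hj1, haj]
        ring
  rw [decomp]
  refine Stmt19.add_mem_cone ?_ (Stmt19.add_mem_cone ?_ ?_)
  · refine Stmt19.sum_mem_cone _ _ (fun i _ => Stmt19.smul_mem_cone ?_ (hlam_nonneg i))
    exact Set.mem_union_right _ ⟨i, rfl⟩
  · refine Stmt19.smul_mem_cone (by simp : q₁ ∈ ({q₁} ∪ {q₂} ∪ Set.range u)) ?_
    rw [hA_eq k (by omega)]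
    exact h1
  · refine Stmt19.smul_mem_cone (by simp : q₂ ∈ ({q₁} ∪ {q₂} ∪ Set.range u)) ?_
    rw [hA_eq (k+1) (by omega)]
    exact h2

lemma Stmt19.part1a (k : ℕ) (hk : k ≥ 2)
    (d : (Fin 5 ⊕ Fin k ⊕ Unit) → Fin (k + 2) → ℝ)
    (hd1 : d (Sum.inl 0) = fun j : Fin (k + 2) =>
      if (j : ℕ) < k then (((j : ℕ) + 1 : ℕ) : ℝ) else if (j : ℕ) = k then 0 else 1)
    (hd2 : d (Sum.inl 1) = fun j : Fin (k + 2) =>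
      if (j : ℕ) = k + 1 then (-2 : ℝ) else 0)
    (hd3 : d (Sum.inl 2) = fun j : Fin (k + 2) =>
      if (j : ℕ) < k then (((j : ℕ) + 1 : ℕ) : ℝ) else if (j : ℕ) = k then 1 else 0)
    (hd4 : d (Sum.inl 3) = fun j : Fin (k + 2) =>
      if (j : ℕ) = k then (-2 : ℝ) else 0)
    (hd5 : d (Sum.inl 4) = fun j : Fin (k + 2) =>
      if (j : ℕ) < k then (2 : ℝ) else 0)
    (hd6 : ∀ i : Fin k, d (Sum.inr (Sum.inl i)) = fun j : Fin (k + 2) =>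
      if (j : ℕ) = (i : ℕ) then (-2 : ℝ) else 0)
    (hd7 : d (Sum.inr (Sum.inr ())) = fun j : Fin (k + 2) =>
      if (j : ℕ) < k then (0 : ℝ) else 1) :
    (⋂ l : Fin 5 ⊕ Fin k ⊕ Unit, cone (d '' {l' | l' ≠ l}))
      ⊆ {a : Fin (k + 2) → ℝ |
          0 ≤ a ⟨k, by have := hk; omega⟩ ∧
          0 ≤ a ⟨k + 1, by have := hk; omega⟩ ∧
          a ⟨1, by have := hk; omega⟩ ≤ 2 * a ⟨0, by have := hk; omega⟩ ∧
          a ⟨k - 2, by have := hk; omega⟩ ≤ a ⟨k - 1, by have := hk; omega⟩ ∧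
          ∀ (i : ℕ) (h1 : 0 < i) (h2 : i + 2 ≤ k),
            a ⟨i - 1, by have := hk; omega⟩ + a ⟨i + 1, by have := hk; omega⟩ ≤ 2 * a ⟨i, by have := hk; omega⟩} := by
  intro x hx
  rw [Set.mem_iInter] at hx
  have fin5 : ∀ i5 : Fin 5, i5 = 0 ∨ i5 = 1 ∨ i5 = 2 ∨ i5 = 3 ∨ i5 = 4 := by decide
  refine ⟨?_, ?_, ?_, ?_, ?_⟩
  · -- 0 ≤ x ⟨k⟩ ; omit d₄ = Sum.inl 3
    refine Stmt19.cone_eval (LinearMap.proj (⟨k, by omega⟩ : Fin (k+2))) ?_ (hx (Sum.inl 3))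
    rintro s ⟨l', hl', rfl⟩
    simp only [Set.mem_setOf_eq] at hl'
    rcases l' with i5 | ik | un
    · rcases fin5 i5 with rfl|rfl|rfl|rfl|rfl <;>
        simp only [LinearMap.proj_apply, hd1, hd2, hd3, hd5, Fin.val_mk]
      · rw [if_neg (by omega)]; norm_num
      · rw [if_neg (by omega)]
      · rw [if_neg (by omega)]; norm_num
      · exact absurd rfl hl'
      · rw [if_neg (by omega)]
    · simp only [LinearMap.proj_apply, hd6 ik, Fin.val_mk]
      rw [if_neg (by omega : ¬ k = (ik : ℕ))]
    · simp only [LinearMap.proj_apply, hd7, Fin.val_mk]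
      rw [if_neg (by omega)]
      norm_num
  · -- 0 ≤ x ⟨k+1⟩ ; omit d₂ = Sum.inl 1
    refine Stmt19.cone_eval (LinearMap.proj (⟨k+1, by omega⟩ : Fin (k+2))) ?_
      (hx (Sum.inl 1))
    rintro s ⟨l', hl', rfl⟩
    simp only [Set.mem_setOf_eq] at hl'
    rcases l' with i5 | ik | un
    · rcases fin5 i5 with rfl|rfl|rfl|rfl|rfl <;>
        simp only [LinearMap.proj_apply, hd1, hd3, hd4, hd5, Fin.val_mk]
      · rw [if_neg (by omega), if_neg (by omega)]; norm_num
      · exact absurd rfl hl'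
      · rw [if_neg (by omega), if_neg (by omega)]
      · rw [if_neg (by omega)]
      · rw [if_neg (by omega)]
    · simp only [LinearMap.proj_apply, hd6 ik, Fin.val_mk]
      rw [if_neg (by omega : ¬ k + 1 = (ik : ℕ))]
    · simp only [LinearMap.proj_apply, hd7, Fin.val_mk]
      rw [if_neg (by omega)]
      norm_num
  · -- x 1 ≤ 2 x 0 ; omit d_{5+1} = Sum.inr (Sum.inl ⟨0,_⟩)
    have h := Stmt19.cone_eval
      ((2 : ℝ) • (LinearMap.proj (⟨0, by omega⟩ : Fin (k+2)) : (Fin (k+2) → ℝ) →ₗ[ℝ] ℝ)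
        - LinearMap.proj (⟨1, by omega⟩ : Fin (k+2))) ?_
      (hx (Sum.inr (Sum.inl ⟨0, by omega⟩)))
    · simp only [LinearMap.sub_apply, LinearMap.smul_apply, LinearMap.proj_apply,
        smul_eq_mul] at h
      linarith
    · rintro s ⟨l', hl', rfl⟩
      simp only [Set.mem_setOf_eq] at hl'
      rcases l' with i5 | ik | un
      · rcases fin5 i5 with rfl|rfl|rfl|rfl|rfl <;>
          simp only [LinearMap.sub_apply, LinearMap.smul_apply, LinearMap.proj_apply,
            smul_eq_mul, hd1, hd2, hd3, hd4, hd5, Fin.val_mk]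
        · rw [if_pos (by omega), if_pos (by omega)]; norm_num
        · rw [if_neg (by omega), if_neg (by omega)]; norm_num
        · rw [if_pos (by omega), if_pos (by omega)]; norm_num
        · rw [if_neg (by omega), if_neg (by omega)]; norm_num
        · rw [if_pos (by omega), if_pos (by omega)]; norm_num
      · have hne : (ik : ℕ) ≠ 0 := by
          intro h0
          exact hl' (by simp [Fin.ext_iff, h0])
        simp only [LinearMap.sub_apply, LinearMap.smul_apply, LinearMap.proj_apply,
          smul_eq_mul, hd6 ik, Fin.val_mk]
        rw [if_neg (by omega : ¬ (0 : ℕ) = (ik : ℕ))]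
        split_ifs <;> norm_num
      · simp only [LinearMap.sub_apply, LinearMap.smul_apply, LinearMap.proj_apply,
          smul_eq_mul, hd7, Fin.val_mk]
        rw [if_pos (by omega), if_pos (by omega)]
        norm_num
  · -- x (k-2) ≤ x (k-1) ; omit Sum.inr (Sum.inl ⟨k-1,_⟩)
    have h := Stmt19.cone_eval
      ((LinearMap.proj (⟨k-1, by omega⟩ : Fin (k+2)) : (Fin (k+2) → ℝ) →ₗ[ℝ] ℝ)
        - LinearMap.proj (⟨k-2, by omega⟩ : Fin (k+2))) ?_
      (hx (Sum.inr (Sum.inl ⟨k-1, by omega⟩)))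
    · simp only [LinearMap.sub_apply, LinearMap.proj_apply] at h
      linarith
    · rintro s ⟨l', hl', rfl⟩
      simp only [Set.mem_setOf_eq] at hl'
      rcases l' with i5 | ik | un
      · rcases fin5 i5 with rfl|rfl|rfl|rfl|rfl <;>
          simp only [LinearMap.sub_apply, LinearMap.proj_apply, hd1, hd2, hd3, hd4, hd5,
            Fin.val_mk]
        · rw [if_pos (by omega), if_pos (by omega)]
          have : ((k - 2 + 1 : ℕ) : ℝ) ≤ ((k - 1 + 1 : ℕ) : ℝ) := by
            exact Nat.cast_le.2 (by omega)
          linarith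
        · rw [if_neg (by omega), if_neg (by omega)]; norm_num
        · rw [if_pos (by omega), if_pos (by omega)]
          have : ((k - 2 + 1 : ℕ) : ℝ) ≤ ((k - 1 + 1 : ℕ) : ℝ) := by
            exact Nat.cast_le.2 (by omega)
          linarith
        · rw [if_neg (by omega), if_neg (by omega)]; norm_num
        · rw [if_pos (by omega), if_pos (by omega)]; norm_num
      · have hne : (ik : ℕ) ≠ k - 1 := by
          intro h0
          exact hl' (by simp [Fin.ext_iff, h0])
        simp only [LinearMap.sub_apply, LinearMap.proj_apply, hd6 ik, Fin.val_mk]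
        rw [if_neg (by omega : ¬ (k - 1 : ℕ) = (ik : ℕ))]
        split_ifs <;> norm_num
      · simp only [LinearMap.sub_apply, LinearMap.proj_apply, hd7, Fin.val_mk]
        rw [if_pos (by omega), if_pos (by omega)]
        norm_num
  · -- middle concavity ; omit Sum.inr (Sum.inl ⟨i,_⟩)
    intro i hi1 hi2
    have h := Stmt19.cone_eval
      ((2 : ℝ) • (LinearMap.proj (⟨i, by omega⟩ : Fin (k+2)) : (Fin (k+2) → ℝ) →ₗ[ℝ] ℝ)
        - LinearMap.proj (⟨i-1, by omega⟩ : Fin (k+2))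
        - LinearMap.proj (⟨i+1, by omega⟩ : Fin (k+2))) ?_
      (hx (Sum.inr (Sum.inl ⟨i, by omega⟩)))
    · simp only [LinearMap.sub_apply, LinearMap.smul_apply, LinearMap.proj_apply,
        smul_eq_mul] at h
      linarith
    · rintro s ⟨l', hl', rfl⟩
      simp only [Set.mem_setOf_eq] at hl'
      rcases l' with i5 | ik | un
      · rcases fin5 i5 with rfl|rfl|rfl|rfl|rfl <;>
          simp only [LinearMap.sub_apply, LinearMap.smul_apply, LinearMap.proj_apply,
            smul_eq_mul, hd1, hd2, hd3, hd4, hd5, Fin.val_mk]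
        · rw [if_pos (by omega), if_pos (by omega), if_pos (by omega),
            show i - 1 + 1 = i by omega]
          push_cast
          ring_nf
          norm_num
        · rw [if_neg (by omega), if_neg (by omega), if_neg (by omega)]; norm_num
        · rw [if_pos (by omega), if_pos (by omega), if_pos (by omega),
            show i - 1 + 1 = i by omega]
          push_cast
          ring_nf
          norm_num
        · rw [if_neg (by omega), if_neg (by omega), if_neg (by omega)]; norm_num
        · rw [if_pos (by omega), if_pos (by omega), if_pos (by omega)]; norm_num
      · have hne : (ik : ℕ) ≠ i := by
          intro h0
          exact hl' (by simp [Fin.ext_iff, h0])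
        simp only [LinearMap.sub_apply, LinearMap.smul_apply, LinearMap.proj_apply,
          smul_eq_mul, hd6 ik, Fin.val_mk]
        rw [if_neg (by omega : ¬ i = (ik : ℕ))]
        split_ifs with ha hb <;> norm_num
      · simp only [LinearMap.sub_apply, LinearMap.smul_apply, LinearMap.proj_apply,
          smul_eq_mul, hd7, Fin.val_mk]
        rw [if_pos (by omega), if_pos (by omega), if_pos (by omega)]
        norm_num

lemma Stmt19.part1b (k : ℕ) (hk : k ≥ 2)
    (d : (Fin 5 ⊕ Fin k ⊕ Unit) → Fin (k + 2) → ℝ)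
    (hd1 : d (Sum.inl 0) = fun j : Fin (k + 2) =>
      if (j : ℕ) < k then (((j : ℕ) + 1 : ℕ) : ℝ) else if (j : ℕ) = k then 0 else 1)
    (hd2 : d (Sum.inl 1) = fun j : Fin (k + 2) =>
      if (j : ℕ) = k + 1 then (-2 : ℝ) else 0)
    (hd3 : d (Sum.inl 2) = fun j : Fin (k + 2) =>
      if (j : ℕ) < k then (((j : ℕ) + 1 : ℕ) : ℝ) else if (j : ℕ) = k then 1 else 0)
    (hd4 : d (Sum.inl 3) = fun j : Fin (k + 2) =>
      if (j : ℕ) = k then (-2 : ℝ) else 0)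
    (hd5 : d (Sum.inl 4) = fun j : Fin (k + 2) =>
      if (j : ℕ) < k then (2 : ℝ) else 0)
    (hd6 : ∀ i : Fin k, d (Sum.inr (Sum.inl i)) = fun j : Fin (k + 2) =>
      if (j : ℕ) = (i : ℕ) then (-2 : ℝ) else 0)
    (hd7 : d (Sum.inr (Sum.inr ())) = fun j : Fin (k + 2) =>
      if (j : ℕ) < k then (0 : ℝ) else 1)
    (q₁ : Fin (k + 2) → ℝ) (hq₁ : q₁ = fun j : Fin (k + 2) =>
      if (j : ℕ) = k then (1 : ℝ) else 0)
    (q₂ : Fin (k + 2) → ℝ) (hq₂ : q₂ = fun j : Fin (k + 2) =>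
      if (j : ℕ) = k + 1 then (1 : ℝ) else 0)
    (u : Fin k → Fin (k + 2) → ℝ)
    (hu : ∀ i j, u i j =
      if (j : ℕ) < k then ((min ((j : ℕ) + 1) ((i : ℕ) + 1) : ℕ) : ℝ) else 0) :
    cone ({q₁} ∪ {q₂} ∪ Set.range u)
      ⊆ ⋂ l : Fin 5 ⊕ Fin k ⊕ Unit, cone (d '' {l' | l' ≠ l}) := by
  have sum6 : ∀ (f : ℕ → ℝ) (jc : Fin (k + 2)),
      ∑ j : Fin k, f (j : ℕ) * d (Sum.inr (Sum.inl j)) jc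
        = if (jc : ℕ) < k then f (jc : ℕ) * (-2) else 0 := by
    intro f jc
    have e : ∀ j : Fin k, f (j : ℕ) * d (Sum.inr (Sum.inl j)) jc
        = if (jc : ℕ) = (j : ℕ) then (fun t => f t * (-2)) (j : ℕ) else 0 := by
      intro j
      rw [hd6 j]
      simp only [mul_ite, mul_zero]
    rw [Finset.sum_congr rfl (fun j _ => e j)]
    exact Stmt19.sum_fin_ite k (fun t => f t * (-2)) (jc : ℕ)
  -- decomposition identities
  have E1 : q₁ = d (Sum.inl 2)
      + ∑ j : Fin k, ((((j : ℕ) + 1 : ℕ) : ℝ)/2) • d (Sum.inr (Sum.inl j)) := by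
    funext jc
    simp only [Pi.add_apply, Finset.sum_apply, Pi.smul_apply, smul_eq_mul]
    rw [sum6 (fun t => ((t + 1 : ℕ) : ℝ)/2) jc]
    simp only [hd3, hq₁]
    by_cases hjk : (jc : ℕ) < k
    · rw [if_pos hjk, if_pos hjk, if_neg (by omega)]
      push_cast
      ring
    · have hb : (jc : ℕ) < k + 2 := jc.isLt
      by_cases hje : (jc : ℕ) = k
      · have h2 : ¬ (jc : ℕ) = k + 1 := by omega
        simp [hjk, hje, h2] <;> norm_num
      · have h2 : (jc : ℕ) = k + 1 := by omega
        simp [hjk, hje, h2] <;> norm_num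
  have E1' : q₁ = (1/2 : ℝ) • d (Sum.inl 1) + d (Sum.inr (Sum.inr ())) := by
    funext jc
    have hb : (jc : ℕ) < k + 2 := jc.isLt
    simp only [Pi.add_apply, Pi.smul_apply, smul_eq_mul]
    simp only [hd2, hd7, hq₁]
    by_cases hjk : (jc : ℕ) < k
    · have h2 : ¬ (jc : ℕ) = k + 1 := by omega
      have h3 : ¬ (jc : ℕ) = k := by omega
      simp [hjk, h2, h3] <;> norm_num
    · by_cases hje : (jc : ℕ) = k
      · have h2 : ¬ (jc : ℕ) = k + 1 := by omega
        simp [hjk, hje, h2] <;> norm_num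
      · have h2 : (jc : ℕ) = k + 1 := by omega
        simp [hjk, hje, h2] <;> norm_num
  have E2 : q₂ = d (Sum.inl 0)
      + ∑ j : Fin k, ((((j : ℕ) + 1 : ℕ) : ℝ)/2) • d (Sum.inr (Sum.inl j)) := by
    funext jc
    simp only [Pi.add_apply, Finset.sum_apply, Pi.smul_apply, smul_eq_mul]
    rw [sum6 (fun t => ((t + 1 : ℕ) : ℝ)/2) jc]
    simp only [hd1, hq₂]
    by_cases hjk : (jc : ℕ) < k
    · rw [if_pos hjk, if_pos hjk, if_neg (by omega)]
      push_cast
      ring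
    · have hb : (jc : ℕ) < k + 2 := jc.isLt
      by_cases hje : (jc : ℕ) = k
      · have h2 : ¬ (jc : ℕ) = k + 1 := by omega
        simp [hjk, hje, h2] <;> norm_num
      · have h2 : (jc : ℕ) = k + 1 := by omega
        simp [hjk, hje, h2] <;> norm_num
  have E2' : q₂ = (1/2 : ℝ) • d (Sum.inl 3) + d (Sum.inr (Sum.inr ())) := by
    funext jc
    have hb : (jc : ℕ) < k + 2 := jc.isLt
    simp only [Pi.add_apply, Pi.smul_apply, smul_eq_mul]
    simp only [hd4, hd7, hq₂]
    by_cases hjk : (jc : ℕ) < k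
    · have h2 : ¬ (jc : ℕ) = k + 1 := by omega
      have h3 : ¬ (jc : ℕ) = k := by omega
      simp [hjk, h2, h3] <;> norm_num
    · by_cases hje : (jc : ℕ) = k
      · have h2 : ¬ (jc : ℕ) = k + 1 := by omega
        simp [hjk, hje, h2] <;> norm_num
      · have h2 : (jc : ℕ) = k + 1 := by omega
        simp [hjk, hje, h2] <;> norm_num
  have E3 : ∀ i : Fin k, u i = d (Sum.inl 0) + (1/2 : ℝ) • d (Sum.inl 1)
      + ∑ j : Fin k, ((((j : ℕ) - (i : ℕ) : ℕ) : ℝ)/2) • d (Sum.inr (Sum.inl j)) := by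
    intro i
    funext jc
    simp only [Pi.add_apply, Finset.sum_apply, Pi.smul_apply, smul_eq_mul]
    rw [sum6 (fun t => ((t - (i : ℕ) : ℕ) : ℝ)/2) jc]
    simp only [hd1, hd2, hu]
    by_cases hjk : (jc : ℕ) < k
    · rw [if_pos hjk, if_pos hjk, if_pos hjk, if_neg (by omega)]
      rcases Nat.le_total ((jc : ℕ) + 1) ((i : ℕ) + 1) with hle | hle
      · rw [min_eq_left hle, Nat.sub_eq_zero_of_le (by omega)]
        push_cast
        ring
      · rw [min_eq_right hle]
        have : ((jc : ℕ) - (i : ℕ) : ℕ) = (jc : ℕ) - (i : ℕ) := rfl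
        have hcast : (((jc : ℕ) - (i : ℕ) : ℕ) : ℝ) = ((jc : ℕ) : ℝ) - ((i : ℕ) : ℝ) :=
          Nat.cast_sub (by omega)
        rw [hcast]
        push_cast
        ring
    · have hb : (jc : ℕ) < k + 2 := jc.isLt
      by_cases hje : (jc : ℕ) = k
      · have h2 : ¬ (jc : ℕ) = k + 1 := by omega
        simp [hjk, hje, h2] <;> norm_num
      · have h2 : (jc : ℕ) = k + 1 := by omega
        simp [hjk, hje, h2] <;> norm_num
  have E3' : ∀ i : Fin k, u i = d (Sum.inl 2) + (1/2 : ℝ) • d (Sum.inl 3)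
      + ∑ j : Fin k, ((((j : ℕ) - (i : ℕ) : ℕ) : ℝ)/2) • d (Sum.inr (Sum.inl j)) := by
    intro i
    funext jc
    simp only [Pi.add_apply, Finset.sum_apply, Pi.smul_apply, smul_eq_mul]
    rw [sum6 (fun t => ((t - (i : ℕ) : ℕ) : ℝ)/2) jc]
    simp only [hd3, hd4, hu]
    by_cases hjk : (jc : ℕ) < k
    · rw [if_pos hjk, if_pos hjk, if_pos hjk, if_neg (by omega)]
      rcases Nat.le_total ((jc : ℕ) + 1) ((i : ℕ) + 1) with hle | hle
      · rw [min_eq_left hle, Nat.sub_eq_zero_of_le (by omega)]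
        push_cast
        ring
      · rw [min_eq_right hle]
        have hcast : (((jc : ℕ) - (i : ℕ) : ℕ) : ℝ) = ((jc : ℕ) : ℝ) - ((i : ℕ) : ℝ) :=
          Nat.cast_sub (by omega)
        rw [hcast]
        push_cast
        ring
    · have hb : (jc : ℕ) < k + 2 := jc.isLt
      by_cases hje : (jc : ℕ) = k
      · have h2 : ¬ (jc : ℕ) = k + 1 := by omega
        simp [hjk, hje, h2] <;> norm_num
      · have h2 : (jc : ℕ) = k + 1 := by omega
        simp [hjk, hje, h2] <;> norm_num
  have E3'' : ∀ i : Fin k, u i = ((((i : ℕ) + 1 : ℕ) : ℝ)/2) • d (Sum.inl 4)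
      + ∑ j : Fin k, ((((i : ℕ) - (j : ℕ) : ℕ) : ℝ)/2) • d (Sum.inr (Sum.inl j)) := by
    intro i
    funext jc
    simp only [Pi.add_apply, Finset.sum_apply, Pi.smul_apply, smul_eq_mul]
    rw [sum6 (fun t => (((i : ℕ) - t : ℕ) : ℝ)/2) jc]
    simp only [hd5, hu]
    by_cases hjk : (jc : ℕ) < k
    · rw [if_pos hjk, if_pos hjk, if_pos hjk]
      rcases Nat.le_total ((jc : ℕ) + 1) ((i : ℕ) + 1) with hle | hle
      · rw [min_eq_left hle]
        have hcast : (((i : ℕ) - (jc : ℕ) : ℕ) : ℝ) = ((i : ℕ) : ℝ) - ((jc : ℕ) : ℝ) :=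
          Nat.cast_sub (by omega)
        rw [hcast]
        push_cast
        ring
      · rw [min_eq_right hle, Nat.sub_eq_zero_of_le (by omega)]
        push_cast
        ring
    · simp [hjk]
  -- now the inclusion
  refine Set.subset_iInter fun l => ?_
  apply Stmt19.cone_subset_cone
  intro g hg
  have mem_of_ne : ∀ t : Fin 5 ⊕ Fin k ⊕ Unit, t ≠ l → d t ∈ d '' {l' | l' ≠ l} :=
    fun t ht => ⟨t, ht, rfl⟩
  rcases hg with (hg | hg) | ⟨i, rfl⟩
  · -- g = q₁
    rcases hg with rfl
    by_cases hc : l = Sum.inl 1 ∨ l = Sum.inr (Sum.inr ())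
    · rw [E1]
      refine Stmt19.add_mem_cone (Stmt19.mem_cone_self (mem_of_ne _ ?_))
        (Stmt19.sum_mem_cone _ _ fun j _ => Stmt19.smul_mem_cone (mem_of_ne _ ?_)
          (by positivity))
      · rcases hc with rfl | rfl <;> simp
      · rcases hc with rfl | rfl <;> simp
    · push_neg at hc
      rw [E1']
      exact Stmt19.add_mem_cone
        (Stmt19.smul_mem_cone (mem_of_ne _ (fun h => hc.1 h.symm)) (by norm_num))
        (Stmt19.mem_cone_self (mem_of_ne _ (fun h => hc.2 h.symm)))
  · -- g = q₂
    rcases hg with rfl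
    by_cases hc : l = Sum.inl 3 ∨ l = Sum.inr (Sum.inr ())
    · rw [E2]
      refine Stmt19.add_mem_cone (Stmt19.mem_cone_self (mem_of_ne _ ?_))
        (Stmt19.sum_mem_cone _ _ fun j _ => Stmt19.smul_mem_cone (mem_of_ne _ ?_)
          (by positivity))
      · rcases hc with rfl | rfl <;> simp
      · rcases hc with rfl | rfl <;> simp
    · push_neg at hc
      rw [E2']
      exact Stmt19.add_mem_cone
        (Stmt19.smul_mem_cone (mem_of_ne _ (fun h => hc.1 h.symm)) (by norm_num))
        (Stmt19.mem_cone_self (mem_of_ne _ (fun h => hc.2 h.symm)))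
  · -- g = u i
    rcases l with t5 | jk | un
    · have fin5 : t5 = 0 ∨ t5 = 1 ∨ t5 = 2 ∨ t5 = 3 ∨ t5 = 4 := by
        rcases t5 with ⟨v, hv⟩
        interval_cases v <;> simp [Fin.ext_iff]
      rcases fin5 with rfl | rfl | rfl | rfl | rfl
      · rw [E3' i]
        refine Stmt19.add_mem_cone (Stmt19.add_mem_cone
          (Stmt19.mem_cone_self (mem_of_ne _ (by simp)))
          (Stmt19.smul_mem_cone (mem_of_ne _ (by simp)) (by norm_num)))
          (Stmt19.sum_mem_cone _ _ fun j _ =>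
            Stmt19.smul_mem_cone (mem_of_ne _ (by simp)) (by positivity))
      · rw [E3' i]
        refine Stmt19.add_mem_cone (Stmt19.add_mem_cone
          (Stmt19.mem_cone_self (mem_of_ne _ (by simp)))
          (Stmt19.smul_mem_cone (mem_of_ne _ (by simp)) (by norm_num)))
          (Stmt19.sum_mem_cone _ _ fun j _ =>
            Stmt19.smul_mem_cone (mem_of_ne _ (by simp)) (by positivity))
      · rw [E3 i]
        refine Stmt19.add_mem_cone (Stmt19.add_mem_cone
          (Stmt19.mem_cone_self (mem_of_ne _ (by simp)))
          (Stmt19.smul_mem_cone (mem_of_ne _ (by simp)) (by norm_num)))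
          (Stmt19.sum_mem_cone _ _ fun j _ =>
            Stmt19.smul_mem_cone (mem_of_ne _ (by simp)) (by positivity))
      · rw [E3 i]
        refine Stmt19.add_mem_cone (Stmt19.add_mem_cone
          (Stmt19.mem_cone_self (mem_of_ne _ (by simp)))
          (Stmt19.smul_mem_cone (mem_of_ne _ (by simp)) (by norm_num)))
          (Stmt19.sum_mem_cone _ _ fun j _ =>
            Stmt19.smul_mem_cone (mem_of_ne _ (by simp)) (by positivity))
      · rw [E3 i]
        refine Stmt19.add_mem_cone (Stmt19.add_mem_cone
          (Stmt19.mem_cone_self (mem_of_ne _ (by simp)))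
          (Stmt19.smul_mem_cone (mem_of_ne _ (by simp)) (by norm_num)))
          (Stmt19.sum_mem_cone _ _ fun j _ =>
            Stmt19.smul_mem_cone (mem_of_ne _ (by simp)) (by positivity))
    · by_cases hle : (jk : ℕ) ≤ (i : ℕ)
      · rw [E3 i]
        refine Stmt19.add_mem_cone (Stmt19.add_mem_cone
          (Stmt19.mem_cone_self (mem_of_ne _ (by simp)))
          (Stmt19.smul_mem_cone (mem_of_ne _ (by simp)) (by norm_num)))
          (Stmt19.sum_mem_cone _ _ fun j _ => ?_)
        by_cases hj : j = jk
        · subst hj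
          rw [Nat.sub_eq_zero_of_le (by omega)]
          simpa using (Stmt19.zero_mem_cone (S := d '' {l' | l' ≠ Sum.inr (Sum.inl j)}))
        · exact Stmt19.smul_mem_cone (mem_of_ne _ (by simp [hj])) (by positivity)
      · rw [E3'' i]
        refine Stmt19.add_mem_cone
          (Stmt19.smul_mem_cone (mem_of_ne _ (by simp)) (by positivity))
          (Stmt19.sum_mem_cone _ _ fun j _ => ?_)
        by_cases hj : j = jk
        · subst hj
          rw [Nat.sub_eq_zero_of_le (by omega)]
          simpa using (Stmt19.zero_mem_cone (S := d '' {l' | l' ≠ Sum.inr (Sum.inl j)}))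
        · exact Stmt19.smul_mem_cone (mem_of_ne _ (by simp [hj])) (by positivity)
    · rw [E3 i]
      refine Stmt19.add_mem_cone (Stmt19.add_mem_cone
        (Stmt19.mem_cone_self (mem_of_ne _ (by simp)))
        (Stmt19.smul_mem_cone (mem_of_ne _ (by simp)) (by norm_num)))
        (Stmt19.sum_mem_cone _ _ fun j _ =>
          Stmt19.smul_mem_cone (mem_of_ne _ (by simp)) (by positivity))

/-- for the even dihedral case, the intersection of the cones spanned by
all size-`(k+5)` subsets (facet images) of the `k+6` columns of the weight matrix equals
`cone(q₁, q₂, u₁, …, u_k)`, which equals the polyhedron cut out by the inequalities. -/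
theorem stmt19 (k : ℕ) (hk : 2 ≤ k)
    (d : (Fin 5 ⊕ Fin k ⊕ Unit) → Fin (k + 2) → ℝ)
    (hd1 : d (Sum.inl 0) = fun j : Fin (k + 2) =>
      if (j : ℕ) < k then (((j : ℕ) + 1 : ℕ) : ℝ) else if (j : ℕ) = k then 0 else 1)
    (hd2 : d (Sum.inl 1) = fun j : Fin (k + 2) =>
      if (j : ℕ) = k + 1 then (-2 : ℝ) else 0)
    (hd3 : d (Sum.inl 2) = fun j : Fin (k + 2) =>
      if (j : ℕ) < k then (((j : ℕ) + 1 : ℕ) : ℝ) else if (j : ℕ) = k then 1 else 0)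
    (hd4 : d (Sum.inl 3) = fun j : Fin (k + 2) =>
      if (j : ℕ) = k then (-2 : ℝ) else 0)
    (hd5 : d (Sum.inl 4) = fun j : Fin (k + 2) =>
      if (j : ℕ) < k then (2 : ℝ) else 0)
    (hd6 : ∀ i : Fin k, d (Sum.inr (Sum.inl i)) = fun j : Fin (k + 2) =>
      if (j : ℕ) = (i : ℕ) then (-2 : ℝ) else 0)
    (hd7 : d (Sum.inr (Sum.inr ())) = fun j : Fin (k + 2) =>
      if (j : ℕ) < k then (0 : ℝ) else 1)
    (q₁ : Fin (k + 2) → ℝ) (hq₁ : q₁ = fun j : Fin (k + 2) =>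
      if (j : ℕ) = k then (1 : ℝ) else 0)
    (q₂ : Fin (k + 2) → ℝ) (hq₂ : q₂ = fun j : Fin (k + 2) =>
      if (j : ℕ) = k + 1 then (1 : ℝ) else 0)
    (u : Fin k → Fin (k + 2) → ℝ)
    (hu : ∀ i j, u i j =
      if (j : ℕ) < k then ((min ((j : ℕ) + 1) ((i : ℕ) + 1) : ℕ) : ℝ) else 0) :
    (⋂ l : Fin 5 ⊕ Fin k ⊕ Unit, cone (d '' {l' | l' ≠ l}))
      = cone ({q₁} ∪ {q₂} ∪ Set.range u) ∧
    cone ({q₁} ∪ {q₂} ∪ Set.range u)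
      = {a : Fin (k + 2) → ℝ |
          0 ≤ a ⟨k, by omega⟩ ∧
          0 ≤ a ⟨k + 1, by omega⟩ ∧
          a ⟨1, by omega⟩ ≤ 2 * a ⟨0, by omega⟩ ∧
          a ⟨k - 2, by omega⟩ ≤ a ⟨k - 1, by omega⟩ ∧
          ∀ (i : ℕ) (h1 : 0 < i) (h2 : i + 2 ≤ k),
            a ⟨i - 1, by omega⟩ + a ⟨i + 1, by omega⟩ ≤ 2 * a ⟨i, by omega⟩} := by
  
  have e2 := Set.Subset.antisymm
    (Stmt19.part2a k hk q₁ hq₁ q₂ hq₂ u hu)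
    (Stmt19.part2b k hk q₁ hq₁ q₂ hq₂ u hu)
  refine ⟨Set.Subset.antisymm ?_
    (Stmt19.part1b k hk d hd1 hd2 hd3 hd4 hd5 hd6 hd7 q₁ hq₁ q₂ hq₂ u hu), e2⟩
  intro x hx
  rw [e2]
  exact Stmt19.part1a k hk d hd1 hd2 hd3 hd4 hd5 hd6 hd7 hx
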